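/- For any periodic sequences S, Q ⊆ ℝ, Elm^o(S,Q) = 0 if and only if there exists t ∈ ℝ with Q = {x + t : x ∈ S}, i.e. the oriented elastic metric satisfies the first metric axiom on translation classes of periodic sequences. -/

import Mathlib

/-- A periodic sequence in `ℝ` with an `m`-point motif `p` and period `l`:
the set `{p i + l * j : i ∈ Fin m, j ∈ ℤ}` where `0 ≤ p 0 < p 1 < ⋯ < p (m-1) < l`. -/
structure PSeq (m : ℕ) where
  m_pos : 0 < m
  l : ℝ
  l_pos : 0 < l
  p : Fin m → ℝ
  p_strict : StrictMono p
  p0_nonneg : 0 ≤ p ⟨0, m_pos⟩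
  p_lt : ∀ i, p i < l

namespace PSeq

variable {m : ℕ}

/-- The set of points of the periodic sequence. -/
def pts (S : PSeq m) : Set ℝ := {x | ∃ (i : Fin m) (j : ℤ), x = S.p i + S.l * j}

/-- The period is minimal: the same set of points cannot be produced with a smaller period. -/
def IsMinimal (S : PSeq m) : Prop := ∀ (m' : ℕ) (T : PSeq m'), T.pts = S.pts → S.l ≤ T.l

/-- The distance list `D` of the periodic sequence, indexed by `ZMod m`:
`D i = p (i+1) - p i` for `i < m - 1`, and `D (m-1) = (p 0 + l) - p (m-1)`. -/
noncomputable def D (S : PSeq m) : ZMod m → ℝ := fun i =>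
  letI : NeZero m := ⟨S.m_pos.ne'⟩
  if h : i.val + 1 < m then S.p ⟨i.val + 1, h⟩ - S.p ⟨i.val, i.val_lt⟩
  else S.p ⟨0, S.m_pos⟩ + S.l - S.p ⟨i.val, i.val_lt⟩

end PSeq

/-- The cyclic shift `σ_s` acting on vectors indexed by `ZMod n`: `(σ_s v) i = v (i + s)`. -/
def shiftVec {n : ℕ} (s : ZMod n) (v : ZMod n → ℝ) : ZMod n → ℝ := fun i => v (i + s)

/-- The reversal `ρ`: `(ρ v) i = v (m - 1 - i)` (note `m - 1 = -1` in `ZMod m`). -/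
def revVec {n : ℕ} (v : ZMod n → ℝ) : ZMod n → ℝ := fun i => v (-1 - i)

/-- The Minkowski sup-norm `‖v‖_∞ = max_i |v i|` of a vector indexed by `ZMod n`, `n > 0`. -/
noncomputable def supNorm {n : ℕ} (hn : 0 < n) (v : ZMod n → ℝ) : ℝ :=
  letI : NeZero n := ⟨hn.ne'⟩
  Finset.univ.sup' (Finset.univ_nonempty_iff.mpr ⟨0⟩) fun i => |v i|

namespace PSeq

/-- The distance list of the multiple `(n / m) S` of a periodic sequence `S` with `m ∣ n`,
i.e. the `(n/m)`-fold concatenation of `D S`, indexed by `ZMod n`. -/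
noncomputable def Dc {m : ℕ} (S : PSeq m) (n : ℕ) : ZMod n → ℝ :=
  fun i => S.D ((i.val : ZMod m))

/-- The oriented elastic metric `Elm^o(S,Q)`: with `n = lcm(m₁, m₂)`, the minimum over all
cyclic shifts `s ∈ ZMod n` of `‖D((n/m₁)S) - σ_s(D((n/m₂)Q))‖_∞`. -/
noncomputable def Elmo {m₁ m₂ : ℕ} (S : PSeq m₁) (Q : PSeq m₂) : ℝ :=
  letI : NeZero (Nat.lcm m₁ m₂) := ⟨(Nat.lcm_pos S.m_pos Q.m_pos).ne'⟩
  Finset.univ.inf' (Finset.univ_nonempty_iff.mpr ⟨0⟩)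
    fun s : ZMod (Nat.lcm m₁ m₂) =>
      supNorm (Nat.lcm_pos S.m_pos Q.m_pos)
        fun i => S.Dc (Nat.lcm m₁ m₂) i - shiftVec s (Q.Dc (Nat.lcm m₁ m₂)) i

/-- The unoriented elastic metric `Elm(S,Q)`: the minimum over all `2n` permutations
`σ_s` and `σ_s ∘ ρ` of `‖D((n/m₁)S) - σ(D((n/m₂)Q))‖_∞`, where `n = lcm(m₁, m₂)`. -/
noncomputable def Elm {m₁ m₂ : ℕ} (S : PSeq m₁) (Q : PSeq m₂) : ℝ :=
  letI : NeZero (Nat.lcm m₁ m₂) := ⟨(Nat.lcm_pos S.m_pos Q.m_pos).ne'⟩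
  min
    (Finset.univ.inf' (Finset.univ_nonempty_iff.mpr ⟨0⟩)
      fun s : ZMod (Nat.lcm m₁ m₂) =>
        supNorm (Nat.lcm_pos S.m_pos Q.m_pos)
          fun i => S.Dc (Nat.lcm m₁ m₂) i - shiftVec s (Q.Dc (Nat.lcm m₁ m₂)) i)
    (Finset.univ.inf' (Finset.univ_nonempty_iff.mpr ⟨0⟩)
      fun s : ZMod (Nat.lcm m₁ m₂) =>
        supNorm (Nat.lcm_pos S.m_pos Q.m_pos)
          fun i => S.Dc (Nat.lcm m₁ m₂) i - shiftVec s (revVec (Q.Dc (Nat.lcm m₁ m₂))) i)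

end PSeq

/-! ### Auxiliary machinery for the proof -/

namespace PSeq

variable {m : ℕ}

lemma D_pos' (S : PSeq m) (i : ZMod m) : 0 < S.D i := by
  haveI : NeZero m := ⟨S.m_pos.ne'⟩
  unfold D
  split_ifs with h
  · have : (⟨i.val, i.val_lt⟩ : Fin m) < ⟨i.val + 1, h⟩ := by simp [Fin.lt_def]
    have := S.p_strict this
    linarith
  · have h1 := S.p_lt ⟨i.val, i.val_lt⟩
    have h2 := S.p0_nonneg
    linarith

lemma emod_toNat_lt (S : PSeq m) (k : ℤ) : (k % (m : ℤ)).toNat < m := by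
  have hm : (0 : ℤ) < m := Int.natCast_pos.mpr S.m_pos
  have h1 := Int.emod_lt_of_pos k hm
  have h2 := Int.emod_nonneg k hm.ne'
  omega

/-- The increasing enumeration of the points of `S`. -/
noncomputable def seqF (S : PSeq m) : ℤ → ℝ :=
  fun k => S.p ⟨(k % (m : ℤ)).toNat, S.emod_toNat_lt k⟩ + S.l * ((k / (m : ℤ) : ℤ) : ℝ)

lemma val_intCast' {n : ℕ} [NeZero n] (k : ℤ) :
    ((k : ZMod n)).val = (k % (n : ℤ)).toNat := by
  have h := ZMod.val_intCast (n := n) k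
  omega

lemma seqF_succ_sub (S : PSeq m) (k : ℤ) :
    S.seqF (k + 1) - S.seqF k = S.D (k : ZMod m) := by
  haveI : NeZero m := ⟨S.m_pos.ne'⟩
  have hm : (0 : ℤ) < m := Int.natCast_pos.mpr S.m_pos
  have hr0 : 0 ≤ k % m := Int.emod_nonneg k hm.ne'
  have hrm : k % m < m := Int.emod_lt_of_pos k hm
  have hk : (m : ℤ) * (k / m) + k % m = k := Int.mul_ediv_add_emod k m
  have hv : ((k : ZMod m)).val = (k % (m : ℤ)).toNat := val_intCast' k
  unfold D seqF
  simp only [hv]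
  by_cases h : k % m + 1 < m
  · have h1 : (k + 1) % (m : ℤ) = k % m + 1 := by
      conv_lhs => rw [← hk]
      rw [show (m : ℤ) * (k / m) + k % m + 1 = (k % m + 1) + m * (k / m) by ring,
        Int.add_mul_emod_self_left, Int.emod_eq_of_lt (by omega) h]
    have h2 : (k + 1) / (m : ℤ) = k / m := by
      conv_lhs => rw [← hk]
      rw [show (m : ℤ) * (k / m) + k % m + 1 = (k % m + 1) + m * (k / m) by ring,
        Int.add_mul_ediv_left _ _ hm.ne', Int.ediv_eq_zero_of_lt (by omega) h, zero_add]
    have hd : ((k % (m : ℤ)).toNat + 1 < m) := by omega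
    rw [dif_pos hd]
    simp only [h1, h2]
    have : ((k % (m : ℤ) + 1).toNat) = (k % (m : ℤ)).toNat + 1 := by omega
    simp only [this]
    ring
  · have hke : k % m = (m : ℤ) - 1 := by omega
    have h1 : (k + 1) % (m : ℤ) = 0 := by
      conv_lhs => rw [← hk]
      rw [show (m : ℤ) * (k / m) + k % m + 1 = 0 + m * (k / m + 1) by rw [hke]; ring,
        Int.add_mul_emod_self_left]
      simp
    have h2 : (k + 1) / (m : ℤ) = k / m + 1 := by
      conv_lhs => rw [← hk]
      rw [show (m : ℤ) * (k / m) + k % m + 1 = 0 + m * (k / m + 1) by rw [hke]; ring,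
        Int.add_mul_ediv_left _ _ hm.ne']
      simp
    have hd : ¬ ((k % (m : ℤ)).toNat + 1 < m) := by omega
    rw [dif_neg hd]
    simp only [h1, h2, Int.toNat_zero]
    push_cast
    ring

lemma seqF_strictMono (S : PSeq m) : StrictMono S.seqF := by
  apply strictMono_int_of_lt_succ
  intro k
  have h1 := S.seqF_succ_sub k
  have h2 := S.D_pos' (k : ZMod m)
  linarith

lemma pts_eq_range (S : PSeq m) : S.pts = Set.range S.seqF := by
  ext x
  constructor
  · rintro ⟨i, j, rfl⟩
    refine ⟨(i : ℤ) + m * j, ?_⟩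
    have hm : (0 : ℤ) < m := Int.natCast_pos.mpr S.m_pos
    unfold seqF
    have h1 : ((i : ℤ) + m * j) % (m : ℤ) = i := by
      rw [Int.add_mul_emod_self_left,
        Int.emod_eq_of_lt (by positivity) (by exact_mod_cast i.isLt)]
    have h2 : ((i : ℤ) + m * j) / (m : ℤ) = j := by
      rw [Int.add_mul_ediv_left _ _ hm.ne',
        Int.ediv_eq_zero_of_lt (by positivity) (by exact_mod_cast i.isLt), zero_add]
    simp [h1, h2]
  · rintro ⟨k, rfl⟩
    exact ⟨_, k / m, rfl⟩

end PSeq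

lemma cast_val_bridge {n m : ℕ} [NeZero n] (hd : m ∣ n) (k : ℤ) :
    ((((k : ZMod n)).val : ℕ) : ZMod m) = (k : ZMod m) := by
  have h : (((k : ZMod n)).val : ℤ) = k % (n : ℤ) := ZMod.val_intCast k
  have h2 : (((((k : ZMod n)).val : ℤ)) : ZMod m) = ((k % (n : ℤ) : ℤ) : ZMod m) := by rw [h]
  rw [Int.cast_natCast] at h2
  rw [h2, ZMod.intCast_eq_intCast_iff]
  exact Int.emod_emod_of_dvd k (Int.natCast_dvd_natCast.mpr hd)

lemma exists_shift_of_range_eq {f g : ℤ → ℝ} (hf : StrictMono f) (hg : StrictMono g)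
    (h : Set.range f = Set.range g) : ∃ c : ℤ, ∀ k, f k = g (k + c) := by
  have hmemg : ∀ x : ℤ, ∃ j, g j = f x := by
    intro x
    have : f x ∈ Set.range g := h ▸ Set.mem_range_self x
    obtain ⟨j, hj⟩ := this; exact ⟨j, hj⟩
  have hmemf : ∀ x : ℤ, ∃ j, f j = g x := by
    intro x
    have : g x ∈ Set.range f := h.symm ▸ Set.mem_range_self x
    obtain ⟨j, hj⟩ := this; exact ⟨j, hj⟩
  obtain ⟨c, hc⟩ := hmemg 0
  refine ⟨c, ?_⟩
  have stepU : ∀ k : ℤ, f k = g (k + c) → f (k + 1) = g (k + 1 + c) := by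
    intro k hk
    obtain ⟨j, hj⟩ := hmemg (k + 1)
    obtain ⟨j', hj'⟩ := hmemf (k + 1 + c)
    have h1 : g (k + c) < g j := by rw [hj, ← hk]; exact hf (by omega)
    have hjge : k + c + 1 ≤ j := by
      by_contra hlt
      exact absurd h1 (not_lt.mpr (hg.monotone (by omega)))
    have h2 : f k < f j' := by rw [hj', hk]; exact hg (by omega)
    have hj'ge : k + 1 ≤ j' := by
      by_contra hlt
      exact absurd h2 (not_lt.mpr (hf.monotone (by omega)))
    have hA : f (k + 1) ≤ g (k + 1 + c) := hj' ▸ hf.monotone hj'ge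
    have hB : g (k + 1 + c) ≤ f (k + 1) := hj ▸ hg.monotone (by omega)
    linarith
  have stepD : ∀ k : ℤ, f k = g (k + c) → f (k - 1) = g (k - 1 + c) := by
    intro k hk
    obtain ⟨j, hj⟩ := hmemg (k - 1)
    obtain ⟨j', hj'⟩ := hmemf (k - 1 + c)
    have h1 : g j < g (k + c) := by rw [hj, ← hk]; exact hf (by omega)
    have hjle : j ≤ k - 1 + c := by
      by_contra hlt
      exact absurd h1 (not_lt.mpr (hg.monotone (by omega)))
    have h2 : f j' < f k := by rw [hj', hk]; exact hg (by omega)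
    have hj'le : j' ≤ k - 1 := by
      by_contra hlt
      exact absurd h2 (not_lt.mpr (hf.monotone (by omega)))
    have hA : g (k - 1 + c) ≤ f (k - 1) := hj' ▸ hf.monotone hj'le
    have hB : f (k - 1) ≤ g (k - 1 + c) := hj ▸ hg.monotone hjle
    linarith
  intro k
  induction k using Int.induction_on with
  | zero => rw [zero_add]; exact hc.symm
  | succ i ih => exact stepU i ih
  | pred i ih => have := stepD (-i) ih; simpa [sub_eq_add_neg, add_comm] using this

lemma const_of_step_eq {h : ℤ → ℝ} (hs : ∀ k, h (k + 1) = h k) : ∀ k, h k = h 0 := by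
  intro k
  induction k using Int.induction_on with
  | zero => rfl
  | succ i ih => rw [hs i]; exact ih
  | pred i ih =>
    have := hs (-(i : ℤ) - 1)
    simp only [sub_add_cancel] at this
    rw [← this]
    exact ih

lemma supNorm_nonneg {n : ℕ} (hn : 0 < n) (v : ZMod n → ℝ) : 0 ≤ supNorm hn v := by
  haveI : NeZero n := ⟨hn.ne'⟩
  unfold supNorm
  exact le_trans (abs_nonneg (v 0)) (Finset.le_sup' (fun i : ZMod n => |v i|) (Finset.mem_univ (0 : ZMod n)))

lemma supNorm_eq_zero_of {n : ℕ} (hn : 0 < n) (v : ZMod n → ℝ) (h : ∀ i, v i = 0) :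
    supNorm hn v = 0 := by
  haveI : NeZero n := ⟨hn.ne'⟩
  refine le_antisymm ?_ (supNorm_nonneg hn v)
  unfold supNorm
  apply Finset.sup'_le
  intro i _
  simp [h i]

lemma eq_zero_of_supNorm {n : ℕ} (hn : 0 < n) (v : ZMod n → ℝ) (h : supNorm hn v = 0)
    (i : ZMod n) : v i = 0 := by
  haveI : NeZero n := ⟨hn.ne'⟩
  have hle : |v i| ≤ supNorm hn v := by
    unfold supNorm
    exact Finset.le_sup' (fun i : ZMod n => |v i|) (Finset.mem_univ i)
  rw [h] at hle
  exact abs_nonpos_iff.mp hle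

namespace PSeq

lemma Elmo_eq_zero_iff_shift {m₁ m₂ : ℕ} (S : PSeq m₁) (Q : PSeq m₂) :
    Elmo S Q = 0 ↔ ∃ s : ZMod (Nat.lcm m₁ m₂), ∀ i,
      S.Dc (Nat.lcm m₁ m₂) i = Q.Dc (Nat.lcm m₁ m₂) (i + s) := by
  haveI : NeZero (Nat.lcm m₁ m₂) := ⟨(Nat.lcm_pos S.m_pos Q.m_pos).ne'⟩
  constructor
  · intro h
    unfold Elmo at h
    obtain ⟨s, -, hs⟩ := Finset.exists_mem_eq_inf' (Finset.univ_nonempty_iff.mpr ⟨0⟩)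
      (fun s : ZMod (Nat.lcm m₁ m₂) => supNorm (Nat.lcm_pos S.m_pos Q.m_pos)
        fun i => S.Dc (Nat.lcm m₁ m₂) i - shiftVec s (Q.Dc (Nat.lcm m₁ m₂)) i)
    rw [h] at hs
    refine ⟨s, fun i => ?_⟩
    have h0 := eq_zero_of_supNorm _ _ hs.symm i
    simp only [shiftVec] at h0
    linarith [h0]
  · rintro ⟨s, hs⟩
    have hzero : (supNorm (Nat.lcm_pos S.m_pos Q.m_pos)
        fun i => S.Dc (Nat.lcm m₁ m₂) i - shiftVec s (Q.Dc (Nat.lcm m₁ m₂)) i) = 0 := by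
      apply supNorm_eq_zero_of
      intro i
      simp only [shiftVec]
      rw [hs i]; ring
    unfold Elmo
    refine le_antisymm ?_ ?_
    · exact le_trans (Finset.inf'_le _ (Finset.mem_univ s)) (le_of_eq hzero)
    · exact Finset.le_inf' _ _ fun s _ => supNorm_nonneg _ _

lemma shift_iff_int {m₁ m₂ : ℕ} (S : PSeq m₁) (Q : PSeq m₂) :
    (∃ s : ZMod (Nat.lcm m₁ m₂), ∀ i,
      S.Dc (Nat.lcm m₁ m₂) i = Q.Dc (Nat.lcm m₁ m₂) (i + s))
    ↔ (∃ c : ℤ, ∀ k : ℤ, S.D ((k : ℤ) : ZMod m₁) = Q.D ((k + c : ℤ) : ZMod m₂)) := by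
  haveI : NeZero (Nat.lcm m₁ m₂) := ⟨(Nat.lcm_pos S.m_pos Q.m_pos).ne'⟩
  have hd₁ : m₁ ∣ Nat.lcm m₁ m₂ := Nat.dvd_lcm_left _ _
  have hd₂ : m₂ ∣ Nat.lcm m₁ m₂ := Nat.dvd_lcm_right _ _
  constructor
  · rintro ⟨s, hs⟩
    refine ⟨(s.val : ℤ), fun k => ?_⟩
    have hi := hs ((k : ℤ) : ZMod (Nat.lcm m₁ m₂))
    unfold Dc at hi
    rw [cast_val_bridge hd₁ k] at hi
    have hs' : (((s.val : ℕ)) : ZMod (Nat.lcm m₁ m₂)) = s := ZMod.natCast_rightInverse s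
    have heq : ((k : ℤ) : ZMod (Nat.lcm m₁ m₂)) + s
        = ((k + (s.val : ℤ) : ℤ) : ZMod (Nat.lcm m₁ m₂)) := by
      push_cast [hs']
      rfl
    rw [heq, cast_val_bridge hd₂] at hi
    exact hi
  · rintro ⟨c, hc⟩
    refine ⟨((c : ℤ) : ZMod (Nat.lcm m₁ m₂)), fun i => ?_⟩
    set k : ℤ := (i.val : ℤ) with hkdef
    have hik : ((k : ℤ) : ZMod (Nat.lcm m₁ m₂)) = i := by
      have : (((i.val : ℕ)) : ZMod (Nat.lcm m₁ m₂)) = i := ZMod.natCast_rightInverse i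
      rw [hkdef]
      push_cast [this]
      rfl
    unfold Dc
    rw [← hik, cast_val_bridge hd₁ k]
    have heq : ((k : ℤ) : ZMod (Nat.lcm m₁ m₂)) + ((c : ℤ) : ZMod (Nat.lcm m₁ m₂))
        = ((k + c : ℤ) : ZMod (Nat.lcm m₁ m₂)) := by push_cast; ring
    rw [heq, cast_val_bridge hd₂]
    exact hc k

lemma int_iff_translation {m₁ m₂ : ℕ} (S : PSeq m₁) (Q : PSeq m₂) :
    (∃ c : ℤ, ∀ k : ℤ, S.D ((k : ℤ) : ZMod m₁) = Q.D ((k + c : ℤ) : ZMod m₂))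
    ↔ ∃ t : ℝ, Q.pts = (fun x => x + t) '' S.pts := by
  constructor
  · rintro ⟨c, hc⟩
    have hgap : ∀ k : ℤ, Q.seqF (k + c + 1) - Q.seqF (k + c) = S.seqF (k + 1) - S.seqF k := by
      intro k
      rw [Q.seqF_succ_sub (k + c), S.seqF_succ_sub k, ← hc k]
    set h : ℤ → ℝ := fun k => Q.seqF (k + c) - S.seqF k with hdef
    have hstep : ∀ k, h (k + 1) = h k := by
      intro k
      simp only [hdef]
      have := hgap k
      have harg : k + 1 + c = k + c + 1 := by ring
      rw [harg]
      linarith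
    have hconst : ∀ k, h k = h 0 := const_of_step_eq hstep
    set t : ℝ := h 0 with htdef
    have hQS : ∀ k : ℤ, Q.seqF (k + c) = S.seqF k + t := by
      intro k
      have := hconst k
      simp only [hdef] at this
      linarith [this]
    refine ⟨t, ?_⟩
    rw [Q.pts_eq_range, S.pts_eq_range]
    ext x
    constructor
    · rintro ⟨j, rfl⟩
      refine ⟨S.seqF (j - c), ⟨j - c, rfl⟩, ?_⟩
      have := hQS (j - c)
      rw [show j - c + c = j by ring] at this
      simp [this]
    · rintro ⟨y, ⟨k, rfl⟩, rfl⟩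
      exact ⟨k + c, hQS k⟩
  · rintro ⟨t, ht⟩
    have hg : StrictMono (fun k => S.seqF k + t) := fun a b hab => by
      have := S.seqF_strictMono hab
      simpa using this
    have hrange : Set.range Q.seqF = Set.range (fun k => S.seqF k + t) := by
      rw [← Q.pts_eq_range, ht, S.pts_eq_range]
      ext x
      constructor
      · rintro ⟨y, ⟨k, rfl⟩, rfl⟩
        exact ⟨k, rfl⟩
      · rintro ⟨k, rfl⟩
        exact ⟨S.seqF k, ⟨k, rfl⟩, rfl⟩
    obtain ⟨c, hcc⟩ := exists_shift_of_range_eq Q.seqF_strictMono hg hrange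
    refine ⟨-c, fun k => ?_⟩
    have h1 := Q.seqF_succ_sub (k + -c)
    have h2 := S.seqF_succ_sub k
    have e1 : Q.seqF (k + -c + 1) = S.seqF (k + 1) + t := by
      have := hcc (k + -c + 1)
      rw [show k + -c + 1 + c = k + 1 by ring] at this
      exact this
    have e2 : Q.seqF (k + -c) = S.seqF k + t := by
      have := hcc (k + -c)
      rw [show k + -c + c = k by ring] at this
      exact this
    rw [e1, e2] at h1
    rw [← h2, ← h1]
    ring_nf

end PSeq

/-- the oriented elastic metric vanishes exactly on pairs of periodic
sequences related by translation (first metric axiom on translation classes). -/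
theorem Elmo_eq_zero_iff_translation {m₁ m₂ : ℕ} (S : PSeq m₁) (Q : PSeq m₂) :
    PSeq.Elmo S Q = 0 ↔ ∃ t : ℝ, Q.pts = (fun x => x + t) '' S.pts := by
  rw [PSeq.Elmo_eq_zero_iff_shift, PSeq.shift_iff_int, PSeq.int_iff_translation]
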